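/- For y → +∞, ∫_ℝ H_{0,1}(x)⁴ H_{0,1}'(x) H_{-1,0}(x+y) dx = -e^{-√2 y}(2/15 + o(1)). -/

import Mathlib

open Real MeasureTheory Filter Topology

noncomputable def H01 : ℝ → ℝ := fun x => Real.exp (Real.sqrt 2 * x) / Real.sqrt (1 + Real.exp (2 * Real.sqrt 2 * x))

noncomputable def Hm10 : ℝ → ℝ := fun x => -(Real.exp (-(Real.sqrt 2) * x) / Real.sqrt (1 + Real.exp (-(2 * Real.sqrt 2) * x)))

lemma hA (x : ℝ) : 0 < 1 + Real.exp (2 * Real.sqrt 2 * x) := by positivity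

lemma H01_deriv (x : ℝ) : HasDerivAt H01
    (Real.sqrt 2 * Real.exp (Real.sqrt 2 * x) * (1 + Real.exp (2 * Real.sqrt 2 * x)) ^ (-(3/2) : ℝ)) x := by
  have h1 : HasDerivAt (fun x : ℝ => Real.exp (Real.sqrt 2 * x))
      (Real.exp (Real.sqrt 2 * x) * (Real.sqrt 2 * 1)) x :=
    ((hasDerivAt_id x).const_mul (Real.sqrt 2)).exp
  have h2 : HasDerivAt (fun x : ℝ => 1 + Real.exp (2 * Real.sqrt 2 * x))
      (Real.exp (2 * Real.sqrt 2 * x) * (2 * Real.sqrt 2 * 1)) x :=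
    (((hasDerivAt_id x).const_mul (2 * Real.sqrt 2)).exp).const_add 1
  have h3 : HasDerivAt (fun x : ℝ => (1 + Real.exp (2 * Real.sqrt 2 * x)) ^ (-(1/2) : ℝ))
      (Real.exp (2 * Real.sqrt 2 * x) * (2 * Real.sqrt 2 * 1) * (-(1/2) : ℝ)
        * (1 + Real.exp (2 * Real.sqrt 2 * x)) ^ ((-(1/2) : ℝ) - 1)) x :=
    h2.rpow_const (Or.inl (ne_of_gt (hA x)))
  have h4 := h1.mul h3
  have hfun : H01 = fun x : ℝ => Real.exp (Real.sqrt 2 * x) *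
      (1 + Real.exp (2 * Real.sqrt 2 * x)) ^ (-(1/2) : ℝ) := by
    funext z
    rw [H01]
    rw [show Real.sqrt (1 + Real.exp (2 * Real.sqrt 2 * z)) =
        (1 + Real.exp (2 * Real.sqrt 2 * z)) ^ ((1:ℝ)/2) from Real.sqrt_eq_rpow _,
      div_eq_mul_inv, ← Real.rpow_neg (hA z).le]
  rw [hfun]
  refine h4.congr_deriv ?_
  set A := 1 + Real.exp (2 * Real.sqrt 2 * x) with hAdef
  have hA0 : 0 < A := hA x
  have e1 : A ^ (-(1/2) : ℝ) = A * A ^ (-(3/2) : ℝ) := by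
    rw [← Real.rpow_one_add' (by positivity) (by norm_num)]
    norm_num
  have e2 : A ^ ((-(1/2) : ℝ) - 1) = A ^ (-(3/2) : ℝ) := by norm_num
  rw [e1, e2]
  have : Real.exp (2 * Real.sqrt 2 * x) = A - 1 := by rw [hAdef]; ring
  rw [this]
  ring

noncomputable def bnd (x : ℝ) : ℝ :=
  Real.sqrt 2 * Real.exp (4 * (Real.sqrt 2 * x)) * (1 + Real.exp (2 * Real.sqrt 2 * x)) ^ (-(7/2) : ℝ)

noncomputable def Fant (x : ℝ) : ℝ :=
  -(1/3) * (1 + Real.exp (2 * Real.sqrt 2 * x)) ^ (-(3/2) : ℝ)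
    + (1/5) * (1 + Real.exp (2 * Real.sqrt 2 * x)) ^ (-(5/2) : ℝ)

lemma bnd_pos (x : ℝ) : 0 < bnd x := by
  have := hA x
  unfold bnd
  positivity

lemma Fant_deriv (x : ℝ) : HasDerivAt Fant (bnd x) x := by
  have h2 : HasDerivAt (fun x : ℝ => 1 + Real.exp (2 * Real.sqrt 2 * x))
      (Real.exp (2 * Real.sqrt 2 * x) * (2 * Real.sqrt 2 * 1)) x :=
    (((hasDerivAt_id x).const_mul (2 * Real.sqrt 2)).exp).const_add 1
  have h3 := h2.rpow_const (p := (-(3/2) : ℝ)) (Or.inl (ne_of_gt (hA x)))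
  have h5 := h2.rpow_const (p := (-(5/2) : ℝ)) (Or.inl (ne_of_gt (hA x)))
  have h := (h3.const_mul (-(1/3) : ℝ)).add (h5.const_mul ((1/5) : ℝ))
  refine h.congr_deriv ?_
  set A := 1 + Real.exp (2 * Real.sqrt 2 * x) with hAdef
  have hA0 : 0 < A := hA x
  have e3 : A ^ ((-(3/2) : ℝ) - 1) = A ^ (-(5/2) : ℝ) := by norm_num
  have e5 : A ^ ((-(5/2) : ℝ) - 1) = A ^ (-(7/2) : ℝ) := by norm_num
  have e1 : A ^ (-(5/2) : ℝ) = A * A ^ (-(7/2) : ℝ) := by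
    rw [← Real.rpow_one_add' (by positivity) (by norm_num)]
    norm_num
  have hE : Real.exp (2 * Real.sqrt 2 * x) = A - 1 := by rw [hAdef]; ring
  have hE4 : Real.exp (4 * (Real.sqrt 2 * x)) = (A - 1) ^ 2 := by
    rw [show (4 : ℝ) * (Real.sqrt 2 * x) = (2 * Real.sqrt 2 * x) + (2 * Real.sqrt 2 * x) by ring,
      Real.exp_add, hE]
    ring
  rw [bnd, e3, e5, e1, hE, hE4]
  ring

lemma Fant_abs_le (x : ℝ) : |Fant x| ≤ 1 := by
  have hA0 : 0 < 1 + Real.exp (2 * Real.sqrt 2 * x) := hA x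
  have hA1 : 1 ≤ 1 + Real.exp (2 * Real.sqrt 2 * x) := by
    have := Real.exp_pos (2 * Real.sqrt 2 * x); linarith
  have h3a : (0:ℝ) ≤ (1 + Real.exp (2 * Real.sqrt 2 * x)) ^ (-(3/2) : ℝ) :=
    Real.rpow_nonneg hA0.le _
  have h3b : (1 + Real.exp (2 * Real.sqrt 2 * x)) ^ (-(3/2) : ℝ) ≤ 1 :=
    Real.rpow_le_one_of_one_le_of_nonpos hA1 (by norm_num)
  have h5a : (0:ℝ) ≤ (1 + Real.exp (2 * Real.sqrt 2 * x)) ^ (-(5/2) : ℝ) :=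
    Real.rpow_nonneg hA0.le _
  have h5b : (1 + Real.exp (2 * Real.sqrt 2 * x)) ^ (-(5/2) : ℝ) ≤ 1 :=
    Real.rpow_le_one_of_one_le_of_nonpos hA1 (by norm_num)
  rw [Fant, abs_le]
  constructor <;> nlinarith

lemma bnd_cont : Continuous bnd := by
  have hc : Continuous fun x : ℝ => 1 + Real.exp (2 * Real.sqrt 2 * x) :=
    continuous_const.add (Real.continuous_exp.comp (continuous_const.mul continuous_id))
  exact (continuous_const.mul
      (Real.continuous_exp.comp (continuous_const.mul (continuous_const.mul continuous_id)))).mul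
    (hc.rpow_const fun x => Or.inl (ne_of_gt (hA x)))

lemma bnd_intervalIntegral (a b : ℝ) : (∫ x in a..b, ‖bnd x‖) = Fant b - Fant a := by
  have hnorm : (fun x => ‖bnd x‖) = bnd := funext fun x => abs_of_pos (bnd_pos x)
  rw [hnorm]
  exact intervalIntegral.integral_eq_sub_of_hasDerivAt (fun x _ => Fant_deriv x)
    (bnd_cont.intervalIntegrable _ _)

lemma bnd_intervalIntegral_le (a b : ℝ) : (∫ x in a..b, ‖bnd x‖) ≤ 2 := by
  rw [bnd_intervalIntegral]
  have h1 := abs_le.mp (Fant_abs_le a)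
  have h2 := abs_le.mp (Fant_abs_le b)
  linarith [h1.1, h1.2, h2.1, h2.2]

lemma bnd_integrable : Integrable bnd := by
  have h1 : IntegrableOn bnd (Set.Iic 0) :=
    integrableOn_Iic_of_intervalIntegral_norm_bounded (a := fun i : ℝ => i) 2 0
      (fun i => bnd_cont.integrableOn_Ioc) tendsto_id
      (Eventually.of_forall fun i => bnd_intervalIntegral_le i 0)
  have h2 : IntegrableOn bnd (Set.Ioi 0) :=
    integrableOn_Ioi_of_intervalIntegral_norm_bounded (b := fun i : ℝ => i) 2 0
      (fun i => bnd_cont.integrableOn_Ioc) tendsto_id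
      (Eventually.of_forall fun i => bnd_intervalIntegral_le 0 i)
  have := h1.union h2
  rwa [Set.Iic_union_Ioi, integrableOn_univ] at this

lemma Fant_tendsto_atBot : Tendsto Fant atBot (𝓝 (-(2/15))) := by
  have hlin : Tendsto (fun x : ℝ => 2 * Real.sqrt 2 * x) atBot atBot := by
    apply Tendsto.const_mul_atBot (by positivity : (0:ℝ) < 2 * Real.sqrt 2) tendsto_id
  have hb1 : Tendsto (fun x : ℝ => 1 + Real.exp (2 * Real.sqrt 2 * x)) atBot (𝓝 1) := by
    have := (Real.tendsto_exp_atBot.comp hlin).const_add 1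
    simpa using this
  have h3 := hb1.rpow_const (p := (-(3/2) : ℝ)) (Or.inl one_ne_zero)
  have h5 := hb1.rpow_const (p := (-(5/2) : ℝ)) (Or.inl one_ne_zero)
  have h := (h3.const_mul (-(1/3) : ℝ)).add (h5.const_mul ((1/5) : ℝ))
  rw [Real.one_rpow, Real.one_rpow] at h
  have : (-(1/3) : ℝ) * 1 + (1/5) * 1 = -(2/15) := by norm_num
  rw [this] at h
  exact h

lemma Fant_tendsto_atTop : Tendsto Fant atTop (𝓝 0) := by
  have hlin : Tendsto (fun x : ℝ => 2 * Real.sqrt 2 * x) atTop atTop := by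
    apply Tendsto.const_mul_atTop (by positivity : (0:ℝ) < 2 * Real.sqrt 2) tendsto_id
  have hb1 : Tendsto (fun x : ℝ => 1 + Real.exp (2 * Real.sqrt 2 * x)) atTop atTop :=
    tendsto_atTop_add_const_left _ 1 (Real.tendsto_exp_atTop.comp hlin)
  have h3 := (tendsto_rpow_neg_atTop (by norm_num : (0:ℝ) < 3/2)).comp hb1
  have h5 := (tendsto_rpow_neg_atTop (by norm_num : (0:ℝ) < 5/2)).comp hb1
  have h := (h3.const_mul (-(1/3) : ℝ)).add (h5.const_mul ((1/5) : ℝ))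
  have h2 : Tendsto Fant atTop (𝓝 ((-(1/3) : ℝ) * 0 + (1/5) * 0)) := h
  simpa using h2

lemma integral_bnd : (∫ x, bnd x) = 2/15 := by
  have h := integral_of_hasDerivAt_of_tendsto Fant_deriv bnd_integrable
    Fant_tendsto_atBot Fant_tendsto_atTop
  rw [h]; norm_num

lemma integrand_eq (y x : ℝ) :
    (H01 x)^4 * deriv H01 x * Hm10 (x + y) / Real.exp (-(Real.sqrt 2) * y)
      = -(bnd x / Real.sqrt (1 + Real.exp (-(2 * Real.sqrt 2) * (x + y)))) := by
  have hd : deriv H01 x = Real.sqrt 2 * Real.exp (Real.sqrt 2 * x)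
      * (1 + Real.exp (2 * Real.sqrt 2 * x)) ^ (-(3/2) : ℝ) := (H01_deriv x).deriv
  rw [hd, H01, Hm10, bnd]
  have hA0 : 0 < 1 + Real.exp (2 * Real.sqrt 2 * x) := hA x
  set A := 1 + Real.exp (2 * Real.sqrt 2 * x) with hAdef
  have hB0 : 0 < Real.sqrt (1 + Real.exp (-(2 * Real.sqrt 2) * (x + y))) :=
    Real.sqrt_pos.mpr (by positivity)
  set B := Real.sqrt (1 + Real.exp (-(2 * Real.sqrt 2) * (x + y))) with hBdef
  have hsA : Real.sqrt A ^ 4 = A ^ 2 := by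
    rw [show (4:ℕ) = 2*2 from rfl, pow_mul, Real.sq_sqrt hA0.le]
  have e1 : A ^ (-(3/2) : ℝ) = A ^ 2 * A ^ (-(7/2) : ℝ) := by
    rw [show (A:ℝ)^2 = A ^ (2:ℝ) by rw [← Real.rpow_natCast A 2]; norm_num,
      ← Real.rpow_add hA0]
    norm_num
  have hm : Real.exp (-(Real.sqrt 2) * (x + y))
      = Real.exp (-(Real.sqrt 2) * y) * Real.exp (Real.sqrt 2 * x) * (Real.exp (Real.sqrt 2 * x))⁻¹ * (Real.exp (Real.sqrt 2 * x))⁻¹ := by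
    rw [mul_inv_cancel_right₀ (Real.exp_ne_zero _), ← Real.exp_neg, ← Real.exp_add]
    ring_nf
  have hsq : Real.exp (Real.sqrt 2 * x) ^ 4 = Real.exp (4 * (Real.sqrt 2 * x)) := by
    rw [← Real.exp_nat_mul]; norm_num
  rw [div_pow, hsA, hm, e1, ← hsq]
  have hEx : Real.exp (Real.sqrt 2 * x) ≠ 0 := Real.exp_ne_zero _
  have hEy : Real.exp (-(Real.sqrt 2) * y) ≠ 0 := Real.exp_ne_zero _
  field_simp

theorem stmt17 :
    Tendsto (fun y : ℝ => (∫ x : ℝ, (H01 x)^4 * deriv H01 x * Hm10 (x + y)) / Real.exp (-(Real.sqrt 2) * y))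
      atTop (𝓝 (-(2/15))) := by
  have key : ∀ y : ℝ, (∫ x : ℝ, (H01 x)^4 * deriv H01 x * Hm10 (x + y)) / Real.exp (-(Real.sqrt 2) * y)
      = ∫ x : ℝ, -(bnd x / Real.sqrt (1 + Real.exp (-(2 * Real.sqrt 2) * (x + y)))) := by
    intro y
    rw [← integral_div]
    exact integral_congr_ae (Eventually.of_forall fun x => integrand_eq y x)
  simp only [key]
  have hint : (∫ x : ℝ, -bnd x) = -(2/15 : ℝ) := by
    rw [integral_neg, integral_bnd]
  rw [← hint]
  have hBpos : ∀ y x : ℝ, 0 < Real.sqrt (1 + Real.exp (-(2 * Real.sqrt 2) * (x + y))) :=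
    fun y x => Real.sqrt_pos.mpr (by positivity)
  have hB1 : ∀ y x : ℝ, 1 ≤ Real.sqrt (1 + Real.exp (-(2 * Real.sqrt 2) * (x + y))) := by
    intro y x
    have h := Real.sqrt_le_sqrt (show (1:ℝ) ≤ 1 + Real.exp (-(2 * Real.sqrt 2) * (x + y)) by
      linarith [Real.exp_pos (-(2 * Real.sqrt 2) * (x + y))])
    rwa [Real.sqrt_one] at h
  apply tendsto_integral_filter_of_dominated_convergence bnd
  · apply Eventually.of_forall; intro y
    apply Continuous.aestronglyMeasurable
    have hc : Continuous fun x : ℝ => Real.sqrt (1 + Real.exp (-(2 * Real.sqrt 2) * (x + y))) :=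
      Real.continuous_sqrt.comp (continuous_const.add
        (Real.continuous_exp.comp (continuous_const.mul (continuous_id.add continuous_const))))
    exact (bnd_cont.div hc fun x => (hBpos y x).ne').neg
  · apply Eventually.of_forall; intro y
    apply ae_of_all; intro x
    rw [norm_neg, Real.norm_eq_abs,
      abs_of_nonneg (div_nonneg (bnd_pos x).le (hBpos y x).le)]
    exact div_le_self (bnd_pos x).le (hB1 y x)
  · exact bnd_integrable
  · apply ae_of_all; intro x
    have h2t : Tendsto (fun y : ℝ => (2 * Real.sqrt 2) * (x + y)) atTop atTop :=
      (tendsto_atTop_add_const_left atTop x tendsto_id).const_mul_atTop (by positivity)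
    have h1 : Tendsto (fun y : ℝ => -(2 * Real.sqrt 2) * (x + y)) atTop atBot := by
      have := tendsto_neg_atTop_atBot.comp h2t
      convert this using 1
      funext y; simp [Function.comp]
    have h2 : Tendsto (fun y : ℝ => Real.exp (-(2 * Real.sqrt 2) * (x + y))) atTop (𝓝 0) :=
      Real.tendsto_exp_atBot.comp h1
    have h3 : Tendsto (fun y : ℝ => Real.sqrt (1 + Real.exp (-(2 * Real.sqrt 2) * (x + y))))
        atTop (𝓝 1) := by
      have := (Real.continuous_sqrt.tendsto (1 + 0)).comp (tendsto_const_nhds.add h2)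
      simpa [Function.comp_def] using this
    have h4 := Tendsto.div (tendsto_const_nhds (x := bnd x)) h3 one_ne_zero
    simpa using h4.neg
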